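/- arXiv:math/0607810 — 4 statements merged into one kernel-verified Lean document; each statement's English description precedes it below -/
import Mathlib

section
/- Let S be a positive definite N×N Hermitian matrix in block form [[s, p],[p*, q]] with s of size k×k, and B = [[s^{-1},0],[0,0]]. Then the kernel of D = S^{-1} − B equals the image under S of the subspace E = C^k × {0} ⊂ C^N, i.e. Ker D = S(E). -/
open scoped ComplexOrder

open Matrix

lemma posDef_toBlocks₁₁ {k m : ℕ}
    (S : Matrix (Fin k ⊕ Fin m) (Fin k ⊕ Fin m) ℂ) (hS : S.PosDef) :
    S.toBlocks₁₁.PosDef := by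
  rw [posDef_iff_dotProduct_mulVec]
  constructor
  · have := hS.isHermitian
    ext i j
    have := congrArg (fun M => M (Sum.inl i) (Sum.inl j)) this
    simpa [toBlocks₁₁, conjTranspose_apply] using this
  · intro x hx
    have hx' : (Sum.elim x 0 : Fin k ⊕ Fin m → ℂ) ≠ 0 := by
      intro h
      apply hx
      ext i
      have := congrFun h (Sum.inl i)
      simpa using this
    have := hS.dotProduct_mulVec_pos hx'
    have h1 : star (Sum.elim x (0 : Fin m → ℂ)) = Sum.elim (star x) 0 := by
      ext i; cases i <;> simp
    rw [h1] at this
    nth_rewrite 1 [← Matrix.fromBlocks_toBlocks S] at this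
    rwa [Matrix.fromBlocks_mulVec, Sum.elim_comp_inl, Sum.elim_comp_inr,
      Matrix.mulVec_zero, Matrix.mulVec_zero, add_zero, add_zero,
      sumElim_dotProduct_sumElim, zero_dotProduct, add_zero] at this

/-- With `S` Hermitian positive definite in block form
`[[s, p], [p*, q]]` (`s` of size `k × k`) and `B = [[s⁻¹, 0], [0, 0]]`, the kernel of
`D = S⁻¹ - B` equals the image under `S` of the subspace `E = ℂ^k × {0} ⊆ ℂ^N`. -/
theorem stmt1 {k m : ℕ}
    (S : Matrix (Fin k ⊕ Fin m) (Fin k ⊕ Fin m) ℂ) (hS : S.PosDef)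
    (B : Matrix (Fin k ⊕ Fin m) (Fin k ⊕ Fin m) ℂ)
    (hB : B = Matrix.fromBlocks (S.toBlocks₁₁)⁻¹ 0 0 0) :
    LinearMap.ker (S⁻¹ - B).mulVecLin
      = Submodule.map S.mulVecLin
          (LinearMap.ker (LinearMap.funLeft ℂ ℂ (Sum.inr : Fin m → Fin k ⊕ Fin m))) := by
  have hs := posDef_toBlocks₁₁ S hS
  have hdetS : IsUnit S.det := (Matrix.isUnit_iff_isUnit_det _).mp hS.isUnit
  have hdets : IsUnit S.toBlocks₁₁.det := (Matrix.isUnit_iff_isUnit_det _).mp hs.isUnit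
  have hS' : S = Matrix.fromBlocks S.toBlocks₁₁ S.toBlocks₁₂ S.toBlocks₂₁ S.toBlocks₂₂ :=
    (Matrix.fromBlocks_toBlocks S).symm
  have hBS : B * S =
      Matrix.fromBlocks 1 ((S.toBlocks₁₁)⁻¹ * S.toBlocks₁₂) 0 0 := by
    conv_lhs => rw [hB, hS']
    rw [Matrix.fromBlocks_multiply]
    simp [Matrix.nonsing_inv_mul _ hdets]
  ext x
  simp only [LinearMap.mem_ker, Matrix.mulVecLin_apply, Submodule.mem_map,
    LinearMap.funLeft_apply, Matrix.sub_mulVec, sub_eq_zero]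
  constructor
  · intro h
    refine ⟨S⁻¹ *ᵥ x, ?_, ?_⟩
    · have hy : S⁻¹ *ᵥ x = (B * S) *ᵥ (S⁻¹ *ᵥ x) := by
        rw [Matrix.mulVec_mulVec, mul_assoc, Matrix.mul_nonsing_inv _ hdetS, mul_one, h]
      ext i
      have := congrFun hy (Sum.inr i)
      rw [hBS, Matrix.fromBlocks_mulVec] at this
      simpa using this
    · rw [Matrix.mulVec_mulVec, Matrix.mul_nonsing_inv _ hdetS, Matrix.one_mulVec]
  · rintro ⟨y, hy0, rfl⟩
    have h1 : S⁻¹ *ᵥ (S *ᵥ y) = y := by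
      rw [Matrix.mulVec_mulVec, Matrix.nonsing_inv_mul _ hdetS, Matrix.one_mulVec]
    rw [h1, Matrix.mulVec_mulVec, hBS]
    have hcomp : y ∘ Sum.inr = 0 := funext fun i => congrFun hy0 i
    rw [Matrix.fromBlocks_mulVec, hcomp]
    ext i
    cases i with
    | inl i => simp
    | inr i =>
      have := congrFun hcomp i
      simpa using this
end

section
/- Let V = V* ∈ L¹(0,1), λ_α an eigenvalue, φ_α(x) = φ(x,λ_α), S_α(x) = ∫₀^x φ_α*φ_α dt, B_α and B Hermitian positive semidefinite with the kernel complements E_α and E^(B) of dimension k_α, A = B − B_α. If (C^N ⊖ Ker(S_α(1)^{-1} − B_α)) ∩ E^(B) = {0} and S_α(1)^{-1} − B_α ≥ 0, then det(I + S_α(x) A) ≠ 0 for all x ∈ [0,1]. -/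
open Matrix
open scoped ComplexOrder

set_option linter.unusedSectionVars false
set_option maxHeartbeats 1600000

section Helpers

variable {n : Type*} [Fintype n] [DecidableEq n]

private lemma dot_expand (M : Matrix n n ℂ) (v : n → ℂ) :
    star v ⬝ᵥ (M *ᵥ v) = ∑ i, ∑ j, starRingEnd ℂ (v i) * v j * M i j := by
  simp only [dotProduct, mulVec, Pi.star_apply, Finset.mul_sum, dotProduct]
  exact Finset.sum_congr rfl fun i _ => Finset.sum_congr rfl fun j _ => by
    simp [RCLike.star_def]; ring

private lemma dot_self_eq (w : n → ℂ) :
    star w ⬝ᵥ w = ((∑ k, Complex.normSq (w k) : ℝ) : ℂ) := by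
  simp only [dotProduct, Pi.star_apply, Complex.ofReal_sum]
  exact Finset.sum_congr rfl fun k _ => by
    rw [Complex.normSq_eq_conj_mul_self]; rfl

private lemma conj_dot (C : Matrix n n ℂ) (v : n → ℂ) :
    star v ⬝ᵥ ((Cᴴ * C) *ᵥ v) = star (C *ᵥ v) ⬝ᵥ (C *ᵥ v) := by
  rw [← mulVec_mulVec, dotProduct_mulVec, star_mulVec]

private lemma dot_self_eq_norm (w : n → ℂ) :
    star w ⬝ᵥ w = ((‖(WithLp.equiv 2 (n → ℂ)).symm w‖ : ℝ) : ℂ) ^ 2 := by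
  have := EuclideanSpace.inner_toLp_toLp (𝕜 := ℂ) w w
  rw [dotProduct_comm, ← this, inner_self_eq_norm_sq_to_K]; norm_num

open scoped MatrixOrder in
private lemma exists_sqrt_psd {S : Matrix n n ℂ} (hS : S.PosSemidef) :
    ∃ R : Matrix n n ℂ, R.PosSemidef ∧ R * R = S :=
  ⟨CFC.sqrt S, (CFC.sqrt_nonneg S).posSemidef, CFC.sqrt_mul_sqrt_self S hS.nonneg⟩

/-- If `1 - T Tᴴ ≥ 0` then `1 - Tᴴ T ≥ 0`. -/
private lemma contraction_flip (T : Matrix n n ℂ) (h : (1 - T * Tᴴ).PosSemidef) :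
    (1 - Tᴴ * T).PosSemidef := by
  set e : (n → ℂ) → EuclideanSpace ℂ n := fun x => (WithLp.equiv 2 (n → ℂ)).symm x with he
  have key : ∀ x : n → ℂ, ‖e (Tᴴ *ᵥ x)‖ ≤ ‖e x‖ := by
    intro x
    have h2 := h.dotProduct_mulVec_nonneg x
    rw [sub_mulVec, one_mulVec, dotProduct_sub, ← mulVec_mulVec, dotProduct_mulVec] at h2
    have hsm : star (Tᴴ *ᵥ x) = star x ᵥ* T := by
      rw [star_mulVec, conjTranspose_conjTranspose]
    rw [← hsm, dot_self_eq_norm, dot_self_eq_norm] at h2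
    have h3 : (0:ℂ) ≤ ((‖e x‖ ^ 2 - ‖e (Tᴴ *ᵥ x)‖ ^ 2 : ℝ) : ℂ) := by
      push_cast; convert h2 using 1 <;> ring_nf
    rw [Complex.zero_le_real, sub_nonneg] at h3
    exact (pow_le_pow_iff_left₀ (norm_nonneg _) (norm_nonneg _) two_ne_zero).mp h3
  refine Matrix.PosSemidef.of_dotProduct_mulVec_nonneg ?_ ?_
  · have h1 : Tᴴ * T = (Tᴴ * T)ᴴ := by simp
    have := h.1
    simp only [IsHermitian, conjTranspose_sub, conjTranspose_one, conjTranspose_mul,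
      conjTranspose_conjTranspose] at *
  · intro v
    have hTv : ‖e (T *ᵥ v)‖ ^ 2 ≤ ‖e v‖ ^ 2 := by
      rcases eq_or_ne (T *ᵥ v) 0 with h0 | h0
      · rw [h0]
        have h00 : e 0 = 0 := by simp [he]
        rw [h00]
        simpa using sq_nonneg ‖e v‖
      · have hs : (‖e (T *ᵥ v)‖ : ℂ) ^ 2 = inner ℂ (e v) (e (Tᴴ *ᵥ (T *ᵥ v))) := by
          rw [← dot_self_eq_norm, show inner ℂ (e v) (e (Tᴴ *ᵥ (T *ᵥ v)))
            = star v ⬝ᵥ (Tᴴ *ᵥ (T *ᵥ v)) from dotProduct_comm _ _]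
          conv_rhs => rw [dotProduct_mulVec]
          rw [← star_mulVec]
        have hcs : ‖e (T *ᵥ v)‖ ^ 2 ≤ ‖e v‖ * ‖e (Tᴴ *ᵥ (T *ᵥ v))‖ := by
          calc ‖e (T *ᵥ v)‖ ^ 2 = ‖(‖e (T *ᵥ v)‖ : ℂ) ^ 2‖ := by
                simp [norm_pow]
            _ = ‖(inner ℂ (e v) (e (Tᴴ *ᵥ (T *ᵥ v))) : ℂ)‖ := by rw [hs]
            _ ≤ ‖e v‖ * ‖e (Tᴴ *ᵥ (T *ᵥ v))‖ := norm_inner_le_norm _ _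
        have h4 : ‖e (Tᴴ *ᵥ (T *ᵥ v))‖ ≤ ‖e (T *ᵥ v)‖ := key _
        have h5 : ‖e (T *ᵥ v)‖ ^ 2 ≤ ‖e v‖ * ‖e (T *ᵥ v)‖ :=
          hcs.trans (by gcongr)
        have hpos : 0 < ‖e (T *ᵥ v)‖ := by
          have hne : e (T *ᵥ v) ≠ 0 := fun hx => h0 (by simpa [he] using hx)
          exact norm_pos_iff.mpr hne
        nlinarith [norm_nonneg (e v), norm_nonneg (e (T *ᵥ v))]
    rw [sub_mulVec, one_mulVec, dotProduct_sub, conj_dot, dot_self_eq_norm, dot_self_eq_norm]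
    have : (0:ℂ) ≤ ((‖e v‖ ^ 2 - ‖e (T *ᵥ v)‖ ^ 2 : ℝ) : ℂ) := by
      rw [Complex.zero_le_real, sub_nonneg]; exact hTv
    convert this using 1; push_cast; ring

/-- The key positivity argument: `det (1 + S (B - Bα)) ≠ 0`. -/
private lemma key_pos (S S1 Bα B : Matrix n n ℂ)
    (hS : S.PosSemidef) (hS1 : S1.PosDef) (hle : (S1 - S).PosSemidef)
    (hB : B.PosSemidef)
    (hD : (S1⁻¹ - Bα).PosSemidef)
    (hker : ∀ u : n → ℂ, (S1⁻¹ - Bα) *ᵥ u = 0 → B *ᵥ u = 0 → u = 0) :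
    (1 + S * (B - Bα)).det ≠ 0 := by
  classical
  obtain ⟨R, hR, hRR⟩ : ∃ R : Matrix n n ℂ, R.PosSemidef ∧ R * R = S :=
    exists_sqrt_psd hS
  have hRH : Rᴴ = R := hR.1
  -- determinant identity
  have hdet : (1 + S * (B - Bα)).det = (1 + R * (B - Bα) * R).det := by
    rw [← hRR, Matrix.mul_assoc, Matrix.det_one_add_mul_comm, Matrix.mul_assoc]
  rw [hdet]
  -- Q := sqrt of S1
  have hS1psd : S1.PosSemidef := hS1.posSemidef
  obtain ⟨Q, hQ, hQQ⟩ : ∃ Q : Matrix n n ℂ, Q.PosSemidef ∧ Q * Q = S1 :=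
    exists_sqrt_psd hS1psd
  have hQH : Qᴴ = Q := hQ.1
  have hS1det : IsUnit S1.det := isUnit_iff_ne_zero.mpr (ne_of_gt hS1.det_pos)
  have hQdet : IsUnit Q.det := by
    have : Q.det * Q.det = S1.det := by rw [← Matrix.det_mul, hQQ]
    exact isUnit_of_mul_isUnit_left (this ▸ hS1det)
  have hQinvH : (Q⁻¹)ᴴ = Q⁻¹ := by rw [Matrix.conjTranspose_nonsing_inv, hQH]
  have hQQinv : Q * Q⁻¹ = 1 := Matrix.mul_nonsing_inv Q hQdet
  have hQinvQ : Q⁻¹ * Q = 1 := Matrix.nonsing_inv_mul Q hQdet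
  -- T := Q⁻¹ * R is a contraction
  set T := Q⁻¹ * R with hTdef
  have hTH : Tᴴ = R * Q⁻¹ := by rw [hTdef, conjTranspose_mul, hRH, hQinvH]
  have h2 : 1 - T * Tᴴ = Q⁻¹ * (S1 - S) * Q⁻¹ := by
    rw [hTdef, hTH]
    have : Q⁻¹ * (S1 - S) * Q⁻¹ = Q⁻¹ * S1 * Q⁻¹ - Q⁻¹ * S * Q⁻¹ := by
      noncomm_ring
    rw [this, ← hQQ]
    have h1 : Q⁻¹ * (Q * Q) * Q⁻¹ = 1 := by
      rw [← Matrix.mul_assoc, Matrix.mul_assoc (Q⁻¹ * Q), hQQinv, Matrix.mul_one, hQinvQ]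
    rw [h1, ← hRR]
    noncomm_ring
  have h3 : (1 - T * Tᴴ).PosSemidef := by
    have h0 := hle.conjTranspose_mul_mul_same Q⁻¹
    rw [hQinvH] at h0
    rw [h2]
    exact h0
  have h4 : (1 - Tᴴ * T).PosSemidef := contraction_flip _ h3
  have h5 : Tᴴ * T = R * S1⁻¹ * R := by
    rw [hTH, hTdef, Matrix.mul_assoc, ← Matrix.mul_assoc Q⁻¹ Q⁻¹ R, ← Matrix.mul_inv_rev,
      hQQ, ← Matrix.mul_assoc]
  rw [h5] at h4
  -- decomposition
  have hdecomp : 1 + R * (B - Bα) * R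
      = (1 - R * S1⁻¹ * R) + R * (S1⁻¹ - Bα) * R + R * B * R := by
    noncomm_ring
  -- positive definiteness
  have hpos : (1 + R * (B - Bα) * R).PosDef := by
    have hM2 : (R * (S1⁻¹ - Bα) * R).PosSemidef := by
      have h0 := hD.conjTranspose_mul_mul_same R
      rwa [hRH] at h0
    have hM3 : (R * B * R).PosSemidef := by
      have h0 := hB.conjTranspose_mul_mul_same R
      rwa [hRH] at h0
    refine Matrix.PosDef.of_dotProduct_mulVec_pos ?_ ?_
    · rw [hdecomp]
      exact ((h4.1.add hM2.1).add hM3.1)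
    · intro v hv
      rw [hdecomp]
      set q1 := star v ⬝ᵥ ((1 - R * S1⁻¹ * R) *ᵥ v) with hq1
      set q2 := star v ⬝ᵥ ((R * (S1⁻¹ - Bα) * R) *ᵥ v) with hq2
      set q3 := star v ⬝ᵥ ((R * B * R) *ᵥ v) with hq3
      have hsum : star v ⬝ᵥ (((1 - R * S1⁻¹ * R) + R * (S1⁻¹ - Bα) * R + R * B * R) *ᵥ v)
          = q1 + q2 + q3 := by
        rw [add_mulVec, add_mulVec, dotProduct_add, dotProduct_add]
      rw [hsum]
      have hq1n : 0 ≤ q1 := h4.dotProduct_mulVec_nonneg v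
      have hq2n : 0 ≤ q2 := hM2.dotProduct_mulVec_nonneg v
      have hq3n : 0 ≤ q3 := hM3.dotProduct_mulVec_nonneg v
      rcases lt_or_eq_of_le (add_nonneg (add_nonneg hq1n hq2n) hq3n) with hlt | heq
      · exact hlt
      · exfalso
        have h12 : q1 = 0 ∧ q2 = 0 ∧ q3 = 0 := by
          have e1 : q1 + q2 + q3 = 0 := heq.symm
          have h3z : q3 = 0 := le_antisymm (by
            have : q3 ≤ q1 + q2 + q3 := le_add_of_nonneg_left (add_nonneg hq1n hq2n)
            rwa [e1] at this) hq3n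
          have e2 : q1 + q2 = 0 := by rwa [h3z, add_zero] at e1
          have h2z : q2 = 0 := le_antisymm (by
            have : q2 ≤ q1 + q2 := le_add_of_nonneg_left hq1n
            rwa [e2] at this) hq2n
          have h1z : q1 = 0 := by rwa [h2z, add_zero] at e2
          exact ⟨h1z, h2z, h3z⟩
        obtain ⟨h1z, h2z, h3z⟩ := h12
        set u := R *ᵥ v with hu
        have hsm : star (R *ᵥ v) = star v ᵥ* R := by rw [star_mulVec, hRH]
        have hq2u : q2 = star u ⬝ᵥ ((S1⁻¹ - Bα) *ᵥ u) := by
          rw [hq2, hu, ← mulVec_mulVec, ← mulVec_mulVec, dotProduct_mulVec, hsm]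
        have hq3u : q3 = star u ⬝ᵥ (B *ᵥ u) := by
          rw [hq3, hu, ← mulVec_mulVec, ← mulVec_mulVec, dotProduct_mulVec, hsm]
        have hDu : (S1⁻¹ - Bα) *ᵥ u = 0 :=
          (hD.dotProduct_mulVec_zero_iff u).mp (by rw [← hq2u]; exact h2z)
        have hBu : B *ᵥ u = 0 :=
          (hB.dotProduct_mulVec_zero_iff u).mp (by rw [← hq3u]; exact h3z)
        have hu0 : u = 0 := hker u hDu hBu
        have hM1v : (1 - R * S1⁻¹ * R) *ᵥ v = 0 :=
          (h4.dotProduct_mulVec_zero_iff v).mp h1z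
        have h6 : (R * S1⁻¹ * R) *ᵥ v = v := by
          have h7 := hM1v
          rw [sub_mulVec, one_mulVec, sub_eq_zero] at h7
          exact h7.symm
        have hv0 : v = 0 := by
          rw [← h6, ← mulVec_mulVec, ← hu, hu0, mulVec_zero]
        exact hv hv0
  exact ne_of_gt hpos.det_pos

/-- The intersection condition together with the dimension count forces
`Ker D ∩ Ker B = 0`. -/
private lemma kernel_triv {S1 Bα B : Matrix n n ℂ} (hS1 : S1.PosDef)
    (hdim : Module.finrank ℂ (LinearMap.ker (Matrix.toEuclideanLin B))ᗮ
      = Module.finrank ℂ (LinearMap.ker (Matrix.toEuclideanLin Bα))ᗮ)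
    (hcap : (LinearMap.ker (Matrix.toEuclideanLin (S1⁻¹ - Bα)))ᗮ
      ⊓ (LinearMap.ker (Matrix.toEuclideanLin B))ᗮ = ⊥) :
    ∀ u : n → ℂ, (S1⁻¹ - Bα) *ᵥ u = 0 → B *ᵥ u = 0 → u = 0 := by
  classical
  set fD := Matrix.toEuclideanLin (S1⁻¹ - Bα) with hfD
  set fB := Matrix.toEuclideanLin B with hfB
  set fBα := Matrix.toEuclideanLin Bα with hfBα
  have hS1det : IsUnit S1.det := isUnit_iff_ne_zero.mpr (ne_of_gt hS1.det_pos)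
  have hrank : ∀ M : Matrix n n ℂ,
      Module.finrank ℂ (LinearMap.ker (Matrix.toEuclideanLin M))ᗮ
      = Module.finrank ℂ (LinearMap.range (Matrix.toEuclideanLin M)) := by
    intro M
    have h1 := Submodule.finrank_add_finrank_orthogonal
      (K := LinearMap.ker (Matrix.toEuclideanLin M))
    have h2 := LinearMap.finrank_range_add_finrank_ker (Matrix.toEuclideanLin M)
    omega
  have hsurj : LinearMap.range (Matrix.toEuclideanLin S1⁻¹) = ⊤ := by
    rw [LinearMap.range_eq_top]
    intro y
    refine ⟨Matrix.toEuclideanLin S1 y, ?_⟩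
    simp only [Matrix.toEuclideanLin_apply, Equiv.apply_symm_apply, Matrix.mulVec_mulVec,
      Matrix.nonsing_inv_mul _ hS1det, Matrix.one_mulVec, Equiv.symm_apply_apply]
  have hrange_top : Module.finrank ℂ (LinearMap.range (Matrix.toEuclideanLin S1⁻¹))
      = Module.finrank ℂ (EuclideanSpace ℂ n) := by rw [hsurj]; exact finrank_top _ _
  have hsplit : Matrix.toEuclideanLin S1⁻¹ = fD + fBα := by
    rw [hfD, hfBα, ← map_add]
    congr 1
    exact (sub_add_cancel _ _).symm
  have hrle : LinearMap.range (Matrix.toEuclideanLin S1⁻¹)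
      ≤ LinearMap.range fD ⊔ LinearMap.range fBα := by
    rw [hsplit]
    rintro x ⟨y, rfl⟩
    exact Submodule.add_mem_sup (LinearMap.mem_range_self _ y) (LinearMap.mem_range_self _ y)
  have hsum_ge : Module.finrank ℂ (EuclideanSpace ℂ n)
      ≤ Module.finrank ℂ (LinearMap.range fD) + Module.finrank ℂ (LinearMap.range fBα) := by
    calc Module.finrank ℂ (EuclideanSpace ℂ n)
        = Module.finrank ℂ (LinearMap.range (Matrix.toEuclideanLin S1⁻¹)) := hrange_top.symm
      _ ≤ Module.finrank ℂ
            ((LinearMap.range fD) ⊔ (LinearMap.range fBα) : Submodule ℂ (EuclideanSpace ℂ n)) :=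
          Submodule.finrank_mono hrle
      _ ≤ _ := Submodule.finrank_add_le_finrank_add_finrank _ _
  have hsup : (LinearMap.ker fD)ᗮ ⊔ (LinearMap.ker fB)ᗮ = ⊤ := by
    apply Submodule.eq_top_of_finrank_eq
    apply le_antisymm (Submodule.finrank_le _)
    have h3 := Submodule.finrank_sup_add_finrank_inf_eq (LinearMap.ker fD)ᗮ (LinearMap.ker fB)ᗮ
    rw [hcap] at h3
    simp only [finrank_bot, add_zero] at h3
    rw [h3]
    have h4 : Module.finrank ℂ (LinearMap.ker fD)ᗮ = Module.finrank ℂ (LinearMap.range fD) :=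
      hrank _
    have h5 : Module.finrank ℂ (LinearMap.ker fB)ᗮ = Module.finrank ℂ (LinearMap.range fBα) := by
      rw [hfB] at *
      rw [hdim, hfBα]
      exact hrank _
    omega
  intro u hDu hBu
  set u' : EuclideanSpace ℂ n := (WithLp.equiv 2 (n → ℂ)).symm u with hu'
  have hmem : ∀ M : Matrix n n ℂ, M *ᵥ u = 0 → u' ∈ LinearMap.ker (Matrix.toEuclideanLin M) := by
    intro M hM
    rw [LinearMap.mem_ker, Matrix.toEuclideanLin_apply, hu']
    simp [hM]
  have h1 : u' ∈ ((LinearMap.ker fD)ᗮ ⊔ (LinearMap.ker fB)ᗮ)ᗮ := by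
    rw [← Submodule.inf_orthogonal]
    exact ⟨Submodule.le_orthogonal_orthogonal _ (hmem _ hDu),
      Submodule.le_orthogonal_orthogonal _ (hmem _ hBu)⟩
  rw [hsup, Submodule.top_orthogonal_eq_bot, Submodule.mem_bot] at h1
  have : u = (WithLp.equiv 2 (n → ℂ)) u' := by rw [hu']; simp
  rw [this, h1]
  simp

end Helpers

private lemma quad_aux {N : ℕ}
    (φα : ℝ → Matrix (Fin N) (Fin N) ℂ)
    (hφcont : ∀ i j, Continuous fun t => φα t i j)
    (Sx : ℝ → Matrix (Fin N) (Fin N) ℂ)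
    (hSx : ∀ (x : ℝ) (i j : Fin N), Sx x i j = ∫ t in (0:ℝ)..x, ((φα t)ᴴ * φα t) i j) :
    ∀ (v : Fin N → ℂ) (x : ℝ),
      star v ⬝ᵥ (Sx x *ᵥ v)
        = (((∫ t in (0:ℝ)..x, ∑ k, Complex.normSq ((φα t *ᵥ v) k) : ℝ)) : ℂ) := by
  have hGcont : ∀ i j, Continuous fun t => ((φα t)ᴴ * φα t) i j := by
    intro i j
    simp only [Matrix.mul_apply, Matrix.conjTranspose_apply]
    exact continuous_finset_sum _ fun k _ =>
      ((continuous_star.comp (hφcont k i)).mul (hφcont k j))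
  intro v x
  rw [dot_expand]
  have step1 : ∀ i j : Fin N, starRingEnd ℂ (v i) * v j * Sx x i j
      = ∫ t in (0:ℝ)..x, starRingEnd ℂ (v i) * v j * (((φα t)ᴴ * φα t) i j) := by
    intro i j
    rw [hSx x i j, intervalIntegral.integral_const_mul]
  calc (∑ i, ∑ j, starRingEnd ℂ (v i) * v j * Sx x i j)
      = ∑ i, ∑ j, ∫ t in (0:ℝ)..x,
          starRingEnd ℂ (v i) * v j * (((φα t)ᴴ * φα t) i j) :=
        Finset.sum_congr rfl fun i _ => Finset.sum_congr rfl fun j _ => step1 i j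
    _ = ∑ i, ∫ t in (0:ℝ)..x, ∑ j,
          starRingEnd ℂ (v i) * v j * (((φα t)ᴴ * φα t) i j) :=
        Finset.sum_congr rfl fun i _ =>
          (intervalIntegral.integral_finset_sum fun j _ =>
            ((continuous_const.mul (hGcont i j)).intervalIntegrable _ _)).symm
    _ = ∫ t in (0:ℝ)..x, ∑ i, ∑ j,
          starRingEnd ℂ (v i) * v j * (((φα t)ᴴ * φα t) i j) :=
        (intervalIntegral.integral_finset_sum fun i _ =>
          (continuous_finset_sum _ fun j _ =>
            (continuous_const.mul (hGcont i j))).intervalIntegrable _ _).symm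
    _ = ∫ t in (0:ℝ)..x, ((∑ k, Complex.normSq ((φα t *ᵥ v) k) : ℝ) : ℂ) := by
        refine intervalIntegral.integral_congr fun t _ => ?_
        rw [show ((∑ k, Complex.normSq ((φα t *ᵥ v) k) : ℝ) : ℂ)
            = star v ⬝ᵥ (((φα t)ᴴ * φα t) *ᵥ v) by rw [conj_dot, dot_self_eq],
          dot_expand]
    _ = (((∫ t in (0:ℝ)..x, ∑ k, Complex.normSq ((φα t *ᵥ v) k) : ℝ)) : ℂ) :=
        intervalIntegral.integral_ofReal

private lemma intervalIntegral_conj' {f : ℝ → ℂ} {a b : ℝ} :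
    (∫ t in a..b, (starRingEnd ℂ) (f t)) = (starRingEnd ℂ) (∫ t in a..b, f t) := by
  simp only [intervalIntegral, ← integral_conj, map_sub]

/-- Let `λ_α` be a Dirichlet eigenvalue, `φ_α = φ(·,λ_α)`,
`S_α(x) = ∫₀ˣ φ_α*φ_α dt`, and let `B_α`, `B` be Hermitian positive semidefinite
matrices whose kernel complements `E_α = (Ker B_α)ᗮ` and `E^(B) = (Ker B)ᗮ` have
dimension `k_α = dim Ker φ_α(1)`, and set `A = B - B_α`.  If
`D_α = S_α(1)⁻¹ - B_α ≥ 0` and `(Ker D_α)ᗮ ∩ E^(B) = {0}`, then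
`det (I + S_α(x) A) ≠ 0` for all `x ∈ [0,1]`. -/
theorem stmt13 {N : ℕ}
    (V : ℝ → Matrix (Fin N) (Fin N) ℂ) (hV : ∀ x, (V x).IsHermitian)
    (lam : ℝ)
    (φα φαd : ℝ → Matrix (Fin N) (Fin N) ℂ)
    (hφ0 : φα 0 = 0) (hφd0 : φαd 0 = 1)
    (hde1 : ∀ (x : ℝ) (i j : Fin N), HasDerivAt (fun t => φα t i j) (φαd x i j) x)
    (hde2 : ∀ (x : ℝ) (i j : Fin N),
      HasDerivAt (fun t => φαd t i j) ((V x * φα x - (lam : ℂ) • φα x) i j) x)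
    (heig : LinearMap.ker (φα 1).mulVecLin ≠ ⊥)
    (Sx : ℝ → Matrix (Fin N) (Fin N) ℂ)
    (hSx : ∀ (x : ℝ) (i j : Fin N), Sx x i j = ∫ t in (0:ℝ)..x, ((φα t)ᴴ * φα t) i j)
    (hS1 : (Sx 1).PosDef)
    (Bα B : Matrix (Fin N) (Fin N) ℂ)
    (hBα : Bα.PosSemidef) (hB : B.PosSemidef)
    (hBαdim : Module.finrank ℂ (LinearMap.ker (Matrix.toEuclideanLin Bα))ᗮ
      = Module.finrank ℂ (LinearMap.ker (φα 1).mulVecLin))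
    (hBdim : Module.finrank ℂ (LinearMap.ker (Matrix.toEuclideanLin B))ᗮ
      = Module.finrank ℂ (LinearMap.ker (φα 1).mulVecLin))
    (hD : ((Sx 1)⁻¹ - Bα).PosSemidef)
    (hcap : (LinearMap.ker (Matrix.toEuclideanLin ((Sx 1)⁻¹ - Bα)))ᗮ
      ⊓ (LinearMap.ker (Matrix.toEuclideanLin B))ᗮ = ⊥) :
    ∀ x ∈ Set.Icc (0:ℝ) 1, (1 + Sx x * (B - Bα)).det ≠ 0 := by
  intro x hx
  have hφcont : ∀ i j, Continuous fun t => φα t i j := fun i j =>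
    continuous_iff_continuousAt.mpr fun t => (hde1 t i j).continuousAt
  have quad := quad_aux φα hφcont Sx hSx
  have rcont : ∀ v : Fin N → ℂ,
      Continuous fun t => ∑ k, Complex.normSq ((φα t *ᵥ v) k) := by
    intro v
    refine continuous_finset_sum _ fun k _ => Complex.continuous_normSq.comp ?_
    simp only [Matrix.mulVec, dotProduct]
    exact continuous_finset_sum _ fun j _ => (hφcont k j).mul continuous_const
  have hintg : ∀ (v : Fin N → ℂ) (y z : ℝ),
      IntervalIntegrable (fun t => ∑ k, Complex.normSq ((φα t *ᵥ v) k))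
        MeasureTheory.volume y z :=
    fun v y z => (rcont v).intervalIntegrable _ _
  have hnn : ∀ (v : Fin N → ℂ) (t : ℝ), 0 ≤ ∑ k, Complex.normSq ((φα t *ᵥ v) k) :=
    fun v t => Finset.sum_nonneg fun k _ => Complex.normSq_nonneg _
  have hherm : ∀ y : ℝ, (Sx y).IsHermitian := by
    intro y
    apply Matrix.ext
    intro i j
    rw [conjTranspose_apply, hSx, hSx, RCLike.star_def, ← intervalIntegral_conj']
    refine intervalIntegral.integral_congr fun t _ => ?_
    simp only [Matrix.mul_apply, Matrix.conjTranspose_apply, map_sum, _root_.map_mul,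
      RCLike.star_def, Complex.conj_conj]
    exact Finset.sum_congr rfl fun k _ => mul_comm _ _
  have hpsd : (Sx x).PosSemidef := by
    refine Matrix.PosSemidef.of_dotProduct_mulVec_nonneg (hherm x) fun v => ?_
    rw [quad v x, Complex.zero_le_real]
    exact intervalIntegral.integral_nonneg hx.1 fun t _ => hnn v t
  have hle : (Sx 1 - Sx x).PosSemidef := by
    refine Matrix.PosSemidef.of_dotProduct_mulVec_nonneg ((hherm 1).sub (hherm x)) fun v => ?_
    rw [sub_mulVec, dotProduct_sub, quad v 1, quad v x, ← Complex.ofReal_sub,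
      intervalIntegral.integral_interval_sub_left (hintg v 0 1) (hintg v 0 x),
      Complex.zero_le_real]
    exact intervalIntegral.integral_nonneg hx.2 fun t _ => hnn v t
  have hker := kernel_triv hS1 (hBdim.trans hBαdim.symm) hcap
  exact key_pos (Sx x) (Sx 1) Bα B hpsd hS1 hle hB hD hker
end

section
/- Darboux-type transform: let V = V* ∈ L¹(0,1), λ_α an eigenvalue, φ_α = φ(·,λ_α), S_α(x) = ∫₀^x φ_α*φ_α dt, A = A* a constant matrix with det(I + S_α(x)A) ≠ 0 for all x ∈ [0,1], K(x) = A(I + S_α(x)A)^{-1}, and Ṽ = V − 2(φ_α K φ_α*)'. Then for every λ the function η(x,λ) = φ(x,λ) − φ_α(x) K(x) ∫₀^x φ_α*(t) φ(t,λ) dt satisfies −η'' + Ṽη = λη with η(0,λ)=0, η'(0,λ)=I; i.e. η(·,λ) = φ(·,λ,Ṽ). -/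
open Matrix
section Aux
variable {N : ℕ}

/-- Entrywise derivative of a matrix-valued function. -/
def HDm (F : ℝ → Matrix (Fin N) (Fin N) ℂ) (F' : Matrix (Fin N) (Fin N) ℂ) (x : ℝ) : Prop :=
  ∀ i j, HasDerivAt (fun t => F t i j) (F' i j) x

theorem HDm.const (C : Matrix (Fin N) (Fin N) ℂ) (x : ℝ) : HDm (fun _ => C) 0 x :=
  fun i j => by simpa using hasDerivAt_const x (C i j)

theorem HDm.add {F G : ℝ → Matrix (Fin N) (Fin N) ℂ} {F' G' : Matrix (Fin N) (Fin N) ℂ} {x : ℝ}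
    (hF : HDm F F' x) (hG : HDm G G' x) : HDm (fun t => F t + G t) (F' + G') x :=
  fun i j => by simpa using (hF i j).fun_add (hG i j)

theorem HDm.sub {F G : ℝ → Matrix (Fin N) (Fin N) ℂ} {F' G' : Matrix (Fin N) (Fin N) ℂ} {x : ℝ}
    (hF : HDm F F' x) (hG : HDm G G' x) : HDm (fun t => F t - G t) (F' - G') x :=
  fun i j => by simpa using (hF i j).fun_sub (hG i j)

theorem HDm.neg {F : ℝ → Matrix (Fin N) (Fin N) ℂ} {F' : Matrix (Fin N) (Fin N) ℂ} {x : ℝ}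
    (hF : HDm F F' x) : HDm (fun t => -(F t)) (-F') x :=
  fun i j => by simpa using (hF i j).fun_neg

theorem HDm.smul {F : ℝ → Matrix (Fin N) (Fin N) ℂ} {F' : Matrix (Fin N) (Fin N) ℂ} {x : ℝ}
    (c : ℂ) (hF : HDm F F' x) : HDm (fun t => c • F t) (c • F') x :=
  fun i j => by simpa using (hF i j).const_mul c

theorem HDm.mul {F G : ℝ → Matrix (Fin N) (Fin N) ℂ} {F' G' : Matrix (Fin N) (Fin N) ℂ} {x : ℝ}
    (hF : HDm F F' x) (hG : HDm G G' x) :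
    HDm (fun t => F t * G t) (F' * G x + F x * G') x := by
  intro i j
  have h : HasDerivAt (fun t => ∑ k, F t i k * G t k j)
      (∑ k, (F' i k * G x k j + F x i k * G' k j)) x :=
    HasDerivAt.fun_sum fun k _ => (hF i k).fun_mul (hG k j)
  have h2 : (∑ k, (F' i k * G x k j + F x i k * G' k j)) = (F' * G x + F x * G') i j := by
    simp [Matrix.mul_apply, Matrix.add_apply, Finset.sum_add_distrib]
  rw [h2] at h
  have h3 : (fun t => (F t * G t) i j) = fun t => ∑ k, F t i k * G t k j := by
    funext t; simp [Matrix.mul_apply]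
  rw [h3]; exact h

theorem HDm.conjT {F : ℝ → Matrix (Fin N) (Fin N) ℂ} {F' : Matrix (Fin N) (Fin N) ℂ} {x : ℝ}
    (hF : HDm F F' x) : HDm (fun t => (F t)ᴴ) F'ᴴ x := by
  intro i j
  simpa [Matrix.conjTranspose_apply] using (hF j i).star

theorem HDm.fcongr {F G : ℝ → Matrix (Fin N) (Fin N) ℂ} {F' : Matrix (Fin N) (Fin N) ℂ} {x : ℝ}
    (h : ∀ t, F t = G t) (hF : HDm F F' x) : HDm G F' x := by
  have : F = G := funext h
  rwa [this] at hF

theorem HDm.dcongr {F : ℝ → Matrix (Fin N) (Fin N) ℂ} {F' F'' : Matrix (Fin N) (Fin N) ℂ} {x : ℝ}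
    (hF : HDm F F' x) (h : F' = F'') : HDm F F'' x := h ▸ hF

theorem HDm.unique {F : ℝ → Matrix (Fin N) (Fin N) ℂ} {F' F'' : Matrix (Fin N) (Fin N) ℂ} {x : ℝ}
    (h1 : HDm F F' x) (h2 : HDm F F'' x) : F' = F'' := by
  ext i j; exact (h1 i j).unique (h2 i j)

theorem HDm.isConst {F : ℝ → Matrix (Fin N) (Fin N) ℂ} (h : ∀ t, HDm F 0 t) (x y : ℝ) :
    F x = F y := by
  ext i j
  exact is_const_of_deriv_eq_zero (fun t => ((h t i j).differentiableAt))
    (fun t => by simpa using (h t i j).deriv) x y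

theorem hasDerivAt_primitive {g : ℝ → ℂ} (hg : Continuous g) (x : ℝ) :
    HasDerivAt (fun u => ∫ t in (0:ℝ)..u, g t) (g x) x :=
  intervalIntegral.integral_hasDerivAt_right (hg.intervalIntegrable _ _)
    (hg.stronglyMeasurableAtFilter _ _) hg.continuousAt

theorem matrix_inv_entry (M : Matrix (Fin N) (Fin N) ℂ) (i j : Fin N) :
    M⁻¹ i j = (M.det)⁻¹ * M.adjugate i j := by
  rw [Matrix.inv_def, Ring.inverse_eq_inv']
  simp

theorem HDm.inv {F : ℝ → Matrix (Fin N) (Fin N) ℂ} {F' : ℝ → Matrix (Fin N) (Fin N) ℂ}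
    (hF : ∀ t, HDm F (F' t) t) {x : ℝ} (hdet : (F x).det ≠ 0) :
    HDm (fun t => (F t)⁻¹) (-((F x)⁻¹ * F' x * (F x)⁻¹)) x := by
  have hdiff : ∀ i j, Differentiable ℝ fun t => F t i j :=
    fun i j t => (hF t i j).differentiableAt
  have hdetdiff : Differentiable ℝ fun t => (F t).det := by
    have : (fun t => (F t).det)
        = fun t => ∑ σ : Equiv.Perm (Fin N), (Equiv.Perm.sign σ : ℤ) • ∏ i, F t (σ i) i := by
      funext t; rw [Matrix.det_apply]; simp [Units.smul_def]
    rw [this]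
    exact Differentiable.fun_sum fun σ _ => by
      simpa [zsmul_eq_mul] using
        (Differentiable.finset_prod (u := Finset.univ)
          (f := fun i t => F t (σ i) i) (fun i _ => hdiff _ _)).const_mul
          ((Equiv.Perm.sign σ : ℤ) : ℂ)
  have hadjdiff : ∀ i j, Differentiable ℝ fun t => (F t).adjugate i j := by
    intro i j
    have : (fun t => (F t).adjugate i j)
        = fun t => ∑ σ : Equiv.Perm (Fin N),
            (Equiv.Perm.sign σ : ℤ) • ∏ k, (if σ k = j then Pi.single i 1 k else F t (σ k) k) := by
      funext t
      rw [Matrix.adjugate_apply, Matrix.det_apply]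
      simp [Matrix.updateRow_apply, Units.smul_def]
    rw [this]
    exact Differentiable.fun_sum fun σ _ => by
      refine Differentiable.fun_const_smul ?_ _
      refine Differentiable.fun_finset_prod fun k _ => ?_
      by_cases h : σ k = j <;> simp [h] <;> first | exact differentiable_const _ | exact hdiff _ _
  have hInvDiff : ∀ i j, DifferentiableAt ℝ (fun t => (F t)⁻¹ i j) x := by
    intro i j
    have : (fun t => (F t)⁻¹ i j) = fun t => ((F t).det)⁻¹ * (F t).adjugate i j :=
      funext fun t => matrix_inv_entry _ _ _
    rw [this]
    exact ((hdetdiff.differentiableAt).inv hdet).mul (hadjdiff i j).differentiableAt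
  set Hd : Matrix (Fin N) (Fin N) ℂ := Matrix.of fun i j => deriv (fun t => (F t)⁻¹ i j) x with hHddef
  have hHd : HDm (fun t => (F t)⁻¹) Hd x := fun i j => (hInvDiff i j).hasDerivAt
  have hev : ∀ᶠ t in nhds x, (F t).det ≠ 0 := by
    have hc : ContinuousAt (fun t => (F t).det) x := hdetdiff.continuous.continuousAt
    exact hc.eventually_ne hdet
  have hmul : HDm (fun t => F t * (F t)⁻¹) (F' x * (F x)⁻¹ + F x * Hd) x := (hF x).mul hHd
  have hone : HDm (fun t => F t * (F t)⁻¹) 0 x := by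
    intro i j
    have : (fun t => (F t * (F t)⁻¹) i j) =ᶠ[nhds x] fun _ => (1 : Matrix (Fin N) (Fin N) ℂ) i j := by
      filter_upwards [hev] with t ht
      rw [Matrix.mul_nonsing_inv _ (Ne.isUnit ht)]
    simpa using (hasDerivAt_const x ((1 : Matrix (Fin N) (Fin N) ℂ) i j)).congr_of_eventuallyEq this
  have hzero : F' x * (F x)⁻¹ + F x * Hd = 0 := hmul.unique hone
  have h1 : F x * Hd = -(F' x * (F x)⁻¹) := by
    rw [eq_neg_iff_add_eq_zero, add_comm]; exact hzero
  have h2 : Hd = -((F x)⁻¹ * F' x * (F x)⁻¹) := by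
    calc Hd = (F x)⁻¹ * (F x * Hd) := by
          rw [← Matrix.mul_assoc, Matrix.nonsing_inv_mul _ (Ne.isUnit hdet), Matrix.one_mul]
      _ = -((F x)⁻¹ * F' x * (F x)⁻¹) := by rw [h1]; simp [Matrix.mul_assoc]
  rwa [h2] at hHd

end Aux

open scoped ComplexOrder
/-- **Darboux-type transform.** Let `V = V*`, `λ_α` a real
eigenvalue parameter, `φ_α = φ(·,λ_α)`, `S_α(x) = ∫₀ˣ φ_α*φ_α dt`, `A = A*` a
constant matrix with `det (I + S_α(x) A) ≠ 0` on `[0,1]`,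
`K(x) = A (I + S_α(x) A)⁻¹`, and `Ṽ = V - 2 (φ_α K φ_α*)'`.  Then for every `λ`
the function `η(x,λ) = φ(x,λ) - φ_α(x) K(x) ∫₀ˣ φ_α* φ(·,λ) dt` satisfies
`-η'' + Ṽη = λη` with `η(0,λ) = 0`, `η'(0,λ) = I`; i.e. `η(·,λ) = φ(·,λ,Ṽ)`. -/
theorem stmt14 {N : ℕ}
    (V : ℝ → Matrix (Fin N) (Fin N) ℂ) (hV : ∀ x, (V x).IsHermitian)
    (φ φd : ℂ → ℝ → Matrix (Fin N) (Fin N) ℂ)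
    (hφ0 : ∀ l, φ l 0 = 0) (hφd0 : ∀ l, φd l 0 = 1)
    (hde1 : ∀ (l : ℂ) (x : ℝ) (i j : Fin N),
      HasDerivAt (fun t => φ l t i j) (φd l x i j) x)
    (hde2 : ∀ (l : ℂ) (x : ℝ) (i j : Fin N),
      HasDerivAt (fun t => φd l t i j) ((V x * φ l x - l • φ l x) i j) x)
    (lam : ℝ)
    (Sx : ℝ → Matrix (Fin N) (Fin N) ℂ)
    (hSx : ∀ (x : ℝ) (i j : Fin N),
      Sx x i j = ∫ t in (0:ℝ)..x, ((φ (lam : ℂ) t)ᴴ * φ (lam : ℂ) t) i j)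
    (A : Matrix (Fin N) (Fin N) ℂ) (hA : A.IsHermitian)
    (hdet : ∀ x ∈ Set.Icc (0:ℝ) 1, (1 + Sx x * A).det ≠ 0)
    (K : ℝ → Matrix (Fin N) (Fin N) ℂ)
    (hK : ∀ x, K x = A * (1 + Sx x * A)⁻¹)
    (W Wd : ℝ → Matrix (Fin N) (Fin N) ℂ)
    (hW : ∀ x, W x = φ (lam : ℂ) x * K x * (φ (lam : ℂ) x)ᴴ)
    (hWd : ∀ x ∈ Set.Icc (0:ℝ) 1, ∀ i j : Fin N,
      HasDerivAt (fun t => W t i j) (Wd x i j) x)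
    (Vt : ℝ → Matrix (Fin N) (Fin N) ℂ)
    (hVt : ∀ x, Vt x = V x - 2 • Wd x)
    (T : ℝ → ℂ → Matrix (Fin N) (Fin N) ℂ)
    (hT : ∀ (x : ℝ) (l : ℂ) (i j : Fin N),
      T x l i j = ∫ t in (0:ℝ)..x, ((φ (lam : ℂ) t)ᴴ * φ l t) i j)
    (η : ℂ → ℝ → Matrix (Fin N) (Fin N) ℂ)
    (hη : ∀ (l : ℂ) (x : ℝ), η l x = φ l x - φ (lam : ℂ) x * K x * T x l) :
    ∀ l : ℂ, η l 0 = 0 ∧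
      ∃ ηd : ℝ → Matrix (Fin N) (Fin N) ℂ, ηd 0 = 1 ∧
        (∀ x ∈ Set.Icc (0:ℝ) 1, ∀ i j : Fin N,
          HasDerivAt (fun t => η l t i j) (ηd x i j) x) ∧
        (∀ x ∈ Set.Icc (0:ℝ) 1, ∀ i j : Fin N,
          HasDerivAt (fun t => ηd t i j) ((Vt x * η l x - l • η l x) i j) x) := by
  intro l
  -- continuity of entries
  have hc1 : ∀ (m : ℂ) (i j : Fin N), Continuous fun t => φ m t i j := by
    intro m i j
    rw [continuous_iff_continuousAt]
    exact fun t => (hde1 m t i j).continuousAt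
  have hcS : ∀ (m : ℂ) (i j : Fin N),
      Continuous fun t => ((φ (lam:ℂ) t)ᴴ * φ m t) i j := by
    intro m i j
    have heq : (fun t => ((φ (lam:ℂ) t)ᴴ * φ m t) i j)
        = fun t => ∑ k, star (φ (lam:ℂ) t k i) * φ m t k j := by
      funext t; simp [Matrix.mul_apply, Matrix.conjTranspose_apply]
    rw [heq]
    exact continuous_finset_sum _ fun k _ => ((hc1 _ _ _).star.mul (hc1 _ _ _))
  -- basic entrywise derivative facts
  have hdφ : ∀ (m : ℂ) (x : ℝ), HDm (φ m) (φd m x) x := fun m x i j => hde1 m x i j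
  have hdφd : ∀ (m : ℂ) (x : ℝ), HDm (φd m) (V x * φ m x - m • φ m x) x :=
    fun m x i j => hde2 m x i j
  have hdah : ∀ x : ℝ, HDm (fun t => (φ (lam:ℂ) t)ᴴ) ((φd (lam:ℂ) x)ᴴ) x :=
    fun x => (hdφ _ x).conjT
  have hdT : ∀ x : ℝ, HDm (fun t => T t l) ((φ (lam:ℂ) x)ᴴ * φ l x) x := by
    intro x i j
    exact (hasDerivAt_primitive (hcS l i j) x).congr_of_eventuallyEq
      (Filter.Eventually.of_forall fun t => hT t l i j)
  have hdS : ∀ x : ℝ, HDm Sx ((φ (lam:ℂ) x)ᴴ * φ (lam:ℂ) x) x := by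
    intro x i j
    exact (hasDerivAt_primitive (hcS (lam:ℂ) i j) x).congr_of_eventuallyEq
      (Filter.Eventually.of_forall fun t => hSx t i j)
  have hdG : ∀ x : ℝ, HDm (fun t => 1 + Sx t * A) ((φ (lam:ℂ) x)ᴴ * φ (lam:ℂ) x * A) x := by
    intro x
    have h := (HDm.const (1 : Matrix (Fin N) (Fin N) ℂ) x).add ((hdS x).mul (HDm.const A x))
    exact h.dcongr (by simp)
  have hdGinv : ∀ x ∈ Set.Icc (0:ℝ) 1,
      HDm (fun t => (1 + Sx t * A)⁻¹)
        (-((1 + Sx x * A)⁻¹ * ((φ (lam:ℂ) x)ᴴ * φ (lam:ℂ) x * A) * (1 + Sx x * A)⁻¹)) x :=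
    fun x hx => HDm.inv (F := fun t => 1 + Sx t * A)
      (F' := fun u => (φ (lam:ℂ) u)ᴴ * φ (lam:ℂ) u * A) hdG (hdet x hx)
  -- K and its derivatives
  obtain ⟨Kd, hKd⟩ : ∃ Kd' : ℝ → Matrix (Fin N) (Fin N) ℂ,
      Kd' = fun u => -(K u * ((φ (lam:ℂ) u)ᴴ * φ (lam:ℂ) u) * K u) := ⟨_, rfl⟩
  have hdK : ∀ x ∈ Set.Icc (0:ℝ) 1, HDm K (Kd x) x := by
    intro x hx
    have h1 := (HDm.const A x).mul (hdGinv x hx)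
    have h2 : HDm (fun t => A * (1 + Sx t * A)⁻¹) (Kd x) x := by
      refine h1.dcongr ?_
      simp only [hKd, hK x]
      simp [Matrix.mul_assoc]
    exact h2.fcongr (fun t => (hK t).symm)
  obtain ⟨Kdd, hKdd⟩ : ∃ Kdd' : ℝ → Matrix (Fin N) (Fin N) ℂ,
      Kdd' = fun u =>
        -(Kd u * ((φ (lam:ℂ) u)ᴴ * φ (lam:ℂ) u) * K u
          + K u * ((φd (lam:ℂ) u)ᴴ * φ (lam:ℂ) u) * K u
          + K u * ((φ (lam:ℂ) u)ᴴ * φd (lam:ℂ) u) * K u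
          + K u * ((φ (lam:ℂ) u)ᴴ * φ (lam:ℂ) u) * Kd u) := ⟨_, rfl⟩
  have hdKd : ∀ x ∈ Set.Icc (0:ℝ) 1, HDm Kd (Kdd x) x := by
    intro x hx
    have hmid : HDm (fun t => (φ (lam:ℂ) t)ᴴ * φ (lam:ℂ) t)
        ((φd (lam:ℂ) x)ᴴ * φ (lam:ℂ) x + (φ (lam:ℂ) x)ᴴ * φd (lam:ℂ) x) x :=
      (hdah x).mul (hdφ _ x)
    have h1 := (((hdK x hx).mul hmid).mul (hdK x hx)).neg
    have h2 : HDm (fun t => -(K t * ((φ (lam:ℂ) t)ᴴ * φ (lam:ℂ) t) * K t)) (Kdd x) x := by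
      refine h1.dcongr ?_
      simp only [hKdd]
      simp only [Matrix.add_mul, Matrix.mul_add]
      abel
    exact h2.fcongr (fun t => by rw [hKd])
  -- the value T 0 l = 0 and base values
  have hT0 : T 0 l = 0 := by
    ext i j; rw [hT 0 l i j, intervalIntegral.integral_same]; simp
  -- Identity (I) : symmetry of the Wronskian-type expression
  have hNall : ∀ u : ℝ,
      (φd (lam:ℂ) u)ᴴ * φ (lam:ℂ) u - (φ (lam:ℂ) u)ᴴ * φd (lam:ℂ) u = 0 := by
    have hz : ∀ t, HDm (fun u => (φd (lam:ℂ) u)ᴴ * φ (lam:ℂ) u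
        - (φ (lam:ℂ) u)ᴴ * φd (lam:ℂ) u) 0 t := by
      intro t
      have h1 := ((hdφd (lam:ℂ) t).conjT.mul (hdφ (lam:ℂ) t)).sub
        ((hdah t).mul (hdφd (lam:ℂ) t))
      refine h1.dcongr ?_
      rw [Matrix.conjTranspose_sub, Matrix.conjTranspose_mul, Matrix.conjTranspose_smul,
        (hV t).eq, Complex.star_def, Complex.conj_ofReal]
      simp only [Matrix.sub_mul, Matrix.mul_sub, smul_mul_assoc, mul_smul_comm,
        Matrix.mul_assoc]
      abel
    intro u
    have h0 := HDm.isConst hz u 0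
    rw [h0, hφ0]
    simp
  -- Identity (II)
  have hMall : ∀ u : ℝ,
      (φd (lam:ℂ) u)ᴴ * φ l u - (φ (lam:ℂ) u)ᴴ * φd l u + ((lam:ℂ) - l) • T u l = 0 := by
    have hz : ∀ t, HDm (fun u => (φd (lam:ℂ) u)ᴴ * φ l u - (φ (lam:ℂ) u)ᴴ * φd l u
        + ((lam:ℂ) - l) • T u l) 0 t := by
      intro t
      have h1 := (((hdφd (lam:ℂ) t).conjT.mul (hdφ l t)).sub
        ((hdah t).mul (hdφd l t))).add (HDm.smul ((lam:ℂ) - l) (hdT t))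
      refine h1.dcongr ?_
      rw [Matrix.conjTranspose_sub, Matrix.conjTranspose_mul, Matrix.conjTranspose_smul,
        (hV t).eq, Complex.star_def, Complex.conj_ofReal]
      simp only [Matrix.sub_mul, Matrix.mul_sub, smul_mul_assoc, mul_smul_comm,
        Matrix.mul_assoc, sub_smul, smul_sub, smul_add]
      abel
    intro u
    have h0 := HDm.isConst hz u 0
    rw [h0, hT0]
    simp [hφ0]
  -- identification of Wd on [0,1]
  have hWdeq : ∀ x ∈ Set.Icc (0:ℝ) 1, Wd x =
      φd (lam:ℂ) x * K x * (φ (lam:ℂ) x)ᴴ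
        + (φ (lam:ℂ) x * Kd x * (φ (lam:ℂ) x)ᴴ + φ (lam:ℂ) x * K x * (φd (lam:ℂ) x)ᴴ) := by
    intro x hx
    have h1 := ((hdφ (lam:ℂ) x).mul (hdK x hx)).mul (hdah x)
    have h2 := h1.fcongr (fun t => (hW t).symm)
    have h3 : HDm W (Wd x) x := fun i j => hWd x hx i j
    have h4 := h3.unique h2
    rw [h4]
    simp only [Matrix.add_mul]
    abel
  -- the witness ηd
  obtain ⟨ηd, hηd⟩ : ∃ ηd' : ℝ → Matrix (Fin N) (Fin N) ℂ,
      ηd' = fun u => φd l u - (φd (lam:ℂ) u * K u * T u l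
        + (φ (lam:ℂ) u * Kd u * T u l
          + φ (lam:ℂ) u * K u * ((φ (lam:ℂ) u)ᴴ * φ l u))) := ⟨_, rfl⟩
  refine ⟨by rw [hη l 0, hφ0, hφ0]; simp, ηd, ?_, ?_, ?_⟩
  · rw [hηd]
    simp [hφ0, hφd0, hT0]
  · -- first derivative
    intro x hx i j
    have h1 := (hdφ l x).sub (((hdφ (lam:ℂ) x).mul (hdK x hx)).mul (hdT x))
    have h2 := h1.fcongr (fun t => (hη l t).symm)
    have h3 : HDm (η l) (ηd x) x := by
      refine h2.dcongr ?_
      simp only [hηd]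
      simp only [Matrix.add_mul]
      abel
    exact h3 i j
  · -- second derivative
    intro x hx i j
    have h1 := (hdφd l x).sub
      (((((hdφd (lam:ℂ) x).mul (hdK x hx)).mul (hdT x)).add
        (((((hdφ (lam:ℂ) x).mul (hdKd x hx)).mul (hdT x)).add
          (((hdφ (lam:ℂ) x).mul (hdK x hx)).mul ((hdah x).mul (hdφ l x)))))))
    have h2 : HDm ηd _ x := h1.fcongr (fun t => by rw [hηd])
    have h3 : HDm ηd (Vt x * η l x - l • η l x) x := by
      refine h2.dcongr ?_
      rw [← sub_eq_zero]
      have hzc : φ (lam:ℂ) x * K x * ((φd (lam:ℂ) x)ᴴ * φ l x - (φ (lam:ℂ) x)ᴴ * φd l x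
            + ((lam:ℂ) - l) • T x l)
          - φ (lam:ℂ) x * K x * (((φd (lam:ℂ) x)ᴴ * φ (lam:ℂ) x
            - (φ (lam:ℂ) x)ᴴ * φd (lam:ℂ) x) * (K x * T x l)) = 0 := by
        rw [hMall x, hNall x]; simp
      rw [← hzc, hVt x, hWdeq x hx, hη l x]
      simp only [hKd, hKdd]
      simp only [Matrix.sub_mul, Matrix.mul_sub, Matrix.add_mul, Matrix.mul_add,
        Matrix.neg_mul, Matrix.mul_neg, smul_mul_assoc, mul_smul_comm, sub_smul,
        smul_sub, smul_add, smul_neg, two_smul, Matrix.mul_assoc]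
      abel
    exact h3 i j
end

section
/- In the setting of the Darboux transform above, with η(x,λ) = φ(x,λ) − φ_α(x)K(x)T(x,λ) and T(x,λ) = ∫₀^x φ_α* φ(·,λ) dt, the transformed Gram matrix satisfies ∫₀^x η*(t,λ)η(t,λ) dt = ∫₀^x φ*(t,λ)φ(t,λ) dt − T*(x,λ) K(x) T(x,λ) for all x ∈ [0,1] and real λ. -/
open Matrix
open scoped ComplexOrder

attribute [local instance] Matrix.linftyOpNormedAddCommGroup Matrix.linftyOpNormedRing
  Matrix.linftyOpNormedAlgebra

namespace Stmt15Aux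

variable {N : ℕ}

noncomputable def entryCLM (i j : Fin N) : Matrix (Fin N) (Fin N) ℂ →L[ℝ] ℂ :=
  LinearMap.toContinuousLinearMap
    { toFun := fun A => A i j
      map_add' := fun _ _ => rfl
      map_smul' := fun _ _ => rfl }

@[simp] lemma entryCLM_apply (i j : Fin N) (A : Matrix (Fin N) (Fin N) ℂ) :
    entryCLM i j A = A i j := rfl

lemma hasDerivAt_entry {f : ℝ → Matrix (Fin N) (Fin N) ℂ} {f' : Matrix (Fin N) (Fin N) ℂ}
    {x : ℝ} (h : HasDerivAt f f' x) (i j : Fin N) :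
    HasDerivAt (fun t => f t i j) (f' i j) x := by
  exact (entryCLM i j).hasFDerivAt.comp_hasDerivAt x h

lemma matrix_eq_sum_smul (B : Matrix (Fin N) (Fin N) ℂ) :
    B = ∑ i, ∑ j, B i j • Matrix.single i j (1 : ℂ) := by
  conv_lhs => rw [Matrix.matrix_eq_sum_single B]
  simp [Matrix.smul_single]

lemma hasDerivAt_of_entries {f : ℝ → Matrix (Fin N) (Fin N) ℂ} {f' : Matrix (Fin N) (Fin N) ℂ}
    {x : ℝ} (h : ∀ i j, HasDerivAt (fun t => f t i j) (f' i j) x) :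
    HasDerivAt f f' x := by
  have key : HasDerivAt (fun t => ∑ i, ∑ j, f t i j • Matrix.single i j (1 : ℂ))
      (∑ i, ∑ j, f' i j • Matrix.single i j (1 : ℂ)) x :=
    HasDerivAt.fun_sum fun i _ => HasDerivAt.fun_sum fun j _ => (h i j).smul_const _
  have e1 : (fun t => ∑ i, ∑ j, f t i j • Matrix.single i j (1 : ℂ)) = f :=
    funext fun t => (matrix_eq_sum_smul (f t)).symm
  rw [e1, ← matrix_eq_sum_smul f'] at key
  exact key

lemma hasDerivAt_star {g : ℝ → ℂ} {g' : ℂ} {x : ℝ} (h : HasDerivAt g g' x) :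
    HasDerivAt (fun t => star (g t)) (star g') x := by
  exact ((Complex.conjCLE : ℂ ≃L[ℝ] ℂ).toContinuousLinearMap.hasFDerivAt).comp_hasDerivAt x h

lemma intervalIntegral_star {f : ℝ → ℂ} {a b : ℝ} :
    (∫ t in a..b, star (f t)) = star (∫ t in a..b, f t) := by
  unfold intervalIntegral
  simp only [← starRingEnd_apply]
  rw [integral_conj, integral_conj, map_sub]

end Stmt15Aux

open Stmt15Aux

/-- In the setting of the Darboux transform, with
`η(x,λ) = φ(x,λ) - φ_α(x) K(x) T(x,λ)` and `T(x,λ) = ∫₀ˣ φ_α* φ(·,λ) dt`, the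
transformed Gram matrix satisfies
`∫₀ˣ η*(t,λ) η(t,λ) dt = ∫₀ˣ φ*(t,λ) φ(t,λ) dt - T*(x,λ) K(x) T(x,λ)`
for all `x ∈ [0,1]` and real `λ`. -/
theorem stmt15 {N : ℕ}
    (V : ℝ → Matrix (Fin N) (Fin N) ℂ) (hV : ∀ x, (V x).IsHermitian)
    (φ φd : ℂ → ℝ → Matrix (Fin N) (Fin N) ℂ)
    (hφ0 : ∀ l, φ l 0 = 0) (hφd0 : ∀ l, φd l 0 = 1)
    (hde1 : ∀ (l : ℂ) (x : ℝ) (i j : Fin N),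
      HasDerivAt (fun t => φ l t i j) (φd l x i j) x)
    (hde2 : ∀ (l : ℂ) (x : ℝ) (i j : Fin N),
      HasDerivAt (fun t => φd l t i j) ((V x * φ l x - l • φ l x) i j) x)
    (lam : ℝ)
    (Sx : ℝ → Matrix (Fin N) (Fin N) ℂ)
    (hSx : ∀ (x : ℝ) (i j : Fin N),
      Sx x i j = ∫ t in (0:ℝ)..x, ((φ (lam : ℂ) t)ᴴ * φ (lam : ℂ) t) i j)
    (A : Matrix (Fin N) (Fin N) ℂ) (hA : A.IsHermitian)
    (hdet : ∀ x ∈ Set.Icc (0:ℝ) 1, (1 + Sx x * A).det ≠ 0)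
    (K : ℝ → Matrix (Fin N) (Fin N) ℂ)
    (hK : ∀ x, K x = A * (1 + Sx x * A)⁻¹)
    (T : ℝ → ℂ → Matrix (Fin N) (Fin N) ℂ)
    (hT : ∀ (x : ℝ) (l : ℂ) (i j : Fin N),
      T x l i j = ∫ t in (0:ℝ)..x, ((φ (lam : ℂ) t)ᴴ * φ l t) i j)
    (η : ℂ → ℝ → Matrix (Fin N) (Fin N) ℂ)
    (hη : ∀ (l : ℂ) (x : ℝ), η l x = φ l x - φ (lam : ℂ) x * K x * T x l) :
    ∀ x ∈ Set.Icc (0:ℝ) 1, ∀ (lr : ℝ) (i j : Fin N),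
      (∫ t in (0:ℝ)..x, ((η (lr : ℂ) t)ᴴ * η (lr : ℂ) t) i j)
        = (∫ t in (0:ℝ)..x, ((φ (lr : ℂ) t)ᴴ * φ (lr : ℂ) t) i j)
          - ((T x (lr : ℂ))ᴴ * K x * T x (lr : ℂ)) i j := by
  intro x hx lr i j
  set l : ℂ := (lr : ℂ) with hl
  -- continuity of entries of φ
  have cφ : ∀ (m : ℂ) (p q : Fin N), Continuous (fun t => φ m t p q) := fun m p q =>
    continuous_iff_continuousAt.2 fun t => (hde1 m t p q).continuousAt
  have cgram : ∀ (m m' : ℂ) (p q : Fin N),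
      Continuous (fun t => ((φ m t)ᴴ * φ m' t) p q) := by
    intro m m' p q
    simp only [Matrix.mul_apply, Matrix.conjTranspose_apply]
    exact continuous_finset_sum _ fun k _ => ((cφ m k p).star).mul (cφ m' k q)
  -- matrix-level derivatives
  have hφM : ∀ (m : ℂ) (t : ℝ), HasDerivAt (φ m) (φd m t) t := fun m t =>
    hasDerivAt_of_entries fun p q => hde1 m t p q
  have hSM : ∀ t : ℝ, HasDerivAt Sx ((φ (lam : ℂ) t)ᴴ * φ (lam : ℂ) t) t := by
    intro t
    refine hasDerivAt_of_entries fun p q => ?_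
    have e : (fun s => Sx s p q)
        = fun s => ∫ u in (0:ℝ)..s, ((φ (lam : ℂ) u)ᴴ * φ (lam : ℂ) u) p q :=
      funext fun s => hSx s p q
    rw [e]
    exact ((cgram _ _ p q).integral_hasStrictDerivAt 0 t).hasDerivAt
  have hTe : ∀ (t : ℝ) (p q : Fin N),
      HasDerivAt (fun s => T s l p q) (((φ (lam : ℂ) t)ᴴ * φ l t) p q) t := by
    intro t p q
    have e : (fun s => T s l p q)
        = fun s => ∫ u in (0:ℝ)..s, ((φ (lam : ℂ) u)ᴴ * φ l u) p q :=
      funext fun s => hT s l p q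
    rw [e]
    exact ((cgram _ _ p q).integral_hasStrictDerivAt 0 t).hasDerivAt
  have hTM : ∀ t : ℝ, HasDerivAt (fun s => T s l) ((φ (lam : ℂ) t)ᴴ * φ l t) t := fun t =>
    hasDerivAt_of_entries (hTe t)
  have hTHM : ∀ t : ℝ, HasDerivAt (fun s => (T s l)ᴴ) ((φ l t)ᴴ * φ (lam : ℂ) t) t := by
    intro t
    refine hasDerivAt_of_entries fun p q => ?_
    have hval : ((φ l t)ᴴ * φ (lam : ℂ) t) p q = star (((φ (lam : ℂ) t)ᴴ * φ l t) q p) := by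
      rw [← Matrix.conjTranspose_apply, Matrix.conjTranspose_mul,
        Matrix.conjTranspose_conjTranspose]
    simp only [Matrix.conjTranspose_apply, hval]
    exact hasDerivAt_star (hTe t q p)
  -- units
  have hunit : ∀ t ∈ Set.Icc (0:ℝ) 1, IsUnit (1 + Sx t * A) := fun t ht =>
    (Matrix.isUnit_iff_isUnit_det _).2 (isUnit_iff_ne_zero.2 (hdet t ht))
  -- derivative of K on [0,1]
  have hKM : ∀ t ∈ Set.Icc (0:ℝ) 1,
      HasDerivAt K (-(K t * ((φ (lam : ℂ) t)ᴴ * φ (lam : ℂ) t) * K t)) t := by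
    intro t ht
    have hu := hunit t ht
    have hUder : HasDerivAt (fun s => 1 + Sx s * A)
        ((φ (lam : ℂ) t)ᴴ * φ (lam : ℂ) t * A) t := ((hSM t).mul_const A).const_add 1
    have hcoe : ((hu.unit⁻¹ : (Matrix (Fin N) (Fin N) ℂ)ˣ) : Matrix (Fin N) (Fin N) ℂ)
        = (1 + Sx t * A)⁻¹ := by
      rw [Matrix.nonsing_inv_eq_ringInverse]
      conv_rhs => rw [← hu.unit_spec]
      exact (Ring.inverse_unit hu.unit).symm
    have h2 := hasFDerivAt_ringInverse (𝕜 := ℝ) hu.unit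
    rw [hu.unit_spec] at h2
    have h3 := h2.comp_hasDerivAt t hUder
    have hiu : HasDerivAt (fun s => Ring.inverse (1 + Sx s * A))
        (-((1 + Sx t * A)⁻¹ * ((φ (lam : ℂ) t)ᴴ * φ (lam : ℂ) t * A) * (1 + Sx t * A)⁻¹)) t := by
      simp [ContinuousLinearMap.mulLeftRight_apply, hcoe] at h3
      exact h3
    have h4 := hiu.const_mul A
    have efun : (fun s => A * Ring.inverse (1 + Sx s * A)) = K := by
      funext s
      rw [hK s, Matrix.nonsing_inv_eq_ringInverse]
    rw [efun] at h4
    have e5 : A * -((1 + Sx t * A)⁻¹ * ((φ (lam : ℂ) t)ᴴ * φ (lam : ℂ) t * A) * (1 + Sx t * A)⁻¹)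
        = -(K t * ((φ (lam : ℂ) t)ᴴ * φ (lam : ℂ) t) * K t) := by
      rw [hK t]
      noncomm_ring
    rw [e5] at h4
    exact h4
  -- hermitian facts
  have hSH : ∀ t : ℝ, (Sx t)ᴴ = Sx t := by
    intro t
    ext p q
    rw [Matrix.conjTranspose_apply, hSx t q p, hSx t p q]
    have e : ∀ u : ℝ, ((φ (lam : ℂ) u)ᴴ * φ (lam : ℂ) u) p q
        = star (((φ (lam : ℂ) u)ᴴ * φ (lam : ℂ) u) q p) := by
      intro u
      rw [← Matrix.conjTranspose_apply, Matrix.conjTranspose_mul,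
        Matrix.conjTranspose_conjTranspose]
    simp_rw [e]
    exact (intervalIntegral_star).symm
  have hKH : ∀ t ∈ Set.Icc (0:ℝ) 1, (K t)ᴴ = K t := by
    intro t ht
    have hu : IsUnit (1 + Sx t * A).det := isUnit_iff_ne_zero.2 (hdet t ht)
    have hu2 : IsUnit (1 + A * Sx t).det := by
      rw [show (1 : Matrix (Fin N) (Fin N) ℂ) + A * Sx t = 1 + A * Sx t from rfl,
        Matrix.det_one_add_mul_comm]
      exact hu
    have key : (1 + A * Sx t) * (A * (1 + Sx t * A)⁻¹) = A := by
      have e : (1 + A * Sx t) * A = A * (1 + Sx t * A) := by noncomm_ring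
      rw [← Matrix.mul_assoc, e, Matrix.mul_assoc, Matrix.mul_nonsing_inv _ hu, Matrix.mul_one]
    have key2 : A * (1 + Sx t * A)⁻¹ = (1 + A * Sx t)⁻¹ * A := by
      have h5 := congrArg (fun M => (1 + A * Sx t)⁻¹ * M) key
      rw [← Matrix.mul_assoc ((1 + A * Sx t)⁻¹) (1 + A * Sx t) (A * (1 + Sx t * A)⁻¹),
        Matrix.nonsing_inv_mul _ hu2, Matrix.one_mul] at h5
      exact h5
    rw [hK t, Matrix.conjTranspose_mul, Matrix.conjTranspose_nonsing_inv,
      Matrix.conjTranspose_add, Matrix.conjTranspose_one, Matrix.conjTranspose_mul,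
      hSH t, hA.eq, ← key2]
  -- the main derivative identity
  have hFder : ∀ t ∈ Set.Icc (0:ℝ) 1,
      HasDerivAt (fun s => (T s l)ᴴ * K s * T s l)
        ((φ l t)ᴴ * φ l t - (η l t)ᴴ * η l t) t := by
    intro t ht
    have h1 := ((hTHM t).mul (hKM t ht)).mul (hTM t)
    refine h1.congr_deriv ?_
    simp only [Pi.mul_apply]
    rw [hη]
    simp only [Matrix.conjTranspose_sub, Matrix.conjTranspose_mul, hKH t ht]
    noncomm_ring
  -- continuity of η entries on [0,1]
  have hx01 : Set.Icc (0:ℝ) x ⊆ Set.Icc 0 1 := Set.Icc_subset_Icc le_rfl hx.2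
  have huIcc : Set.uIcc (0:ℝ) x = Set.Icc 0 x := Set.uIcc_of_le hx.1
  have cη : ∀ t ∈ Set.Icc (0:ℝ) 1, ContinuousAt (η l) t := by
    intro t ht
    have : ContinuousAt (fun s => φ l s - φ (lam : ℂ) s * K s * T s l) t :=
      ((hφM l t).continuousAt).sub
        ((((hφM (lam : ℂ) t).continuousAt).mul ((hKM t ht).continuousAt)).mul
          ((hTM t).continuousAt))
    have e : η l = fun s => φ l s - φ (lam : ℂ) s * K s * T s l := funext fun s => hη l s
    rw [e]
    exact this
  have cηe : ∀ t ∈ Set.Icc (0:ℝ) 1, ∀ p q : Fin N, ContinuousAt (fun s => η l s p q) t := by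
    intro t ht p q
    exact ((entryCLM p q).continuous.continuousAt).comp (cη t ht)
  have cηη : ∀ t ∈ Set.Icc (0:ℝ) 1, ContinuousAt (fun s => ((η l s)ᴴ * η l s) i j) t := by
    intro t ht
    simp only [Matrix.mul_apply, Matrix.conjTranspose_apply]
    exact tendsto_finset_sum _ fun k _ =>
      (((cηe t ht k i).star).mul (cηe t ht k j))
  -- integrability
  have iηη : IntervalIntegrable (fun t => ((η l t)ᴴ * η l t) i j) MeasureTheory.volume 0 x := by
    apply ContinuousOn.intervalIntegrable
    rw [huIcc]
    exact fun t ht => (cηη t (hx01 ht)).continuousWithinAt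
  have iψψ : IntervalIntegrable (fun t => ((φ l t)ᴴ * φ l t) i j) MeasureTheory.volume 0 x :=
    (cgram l l i j).intervalIntegrable 0 x
  -- T 0 = 0
  have hT0 : T 0 l = 0 := by
    ext p q
    rw [hT 0 l p q, intervalIntegral.integral_same]
    rfl
  -- FTC
  have key : (∫ t in (0:ℝ)..x, ((φ l t)ᴴ * φ l t - (η l t)ᴴ * η l t) i j)
      = ((T x l)ᴴ * K x * T x l) i j := by
    have hder : ∀ t ∈ Set.uIcc (0:ℝ) x,
        HasDerivAt (fun s => ((T s l)ᴴ * K s * T s l) i j)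
          (((φ l t)ᴴ * φ l t - (η l t)ᴴ * η l t) i j) t := by
      intro t ht
      exact hasDerivAt_entry (hFder t (hx01 (huIcc ▸ ht))) i j
    have hint : IntervalIntegrable (fun t => ((φ l t)ᴴ * φ l t - (η l t)ᴴ * η l t) i j)
        MeasureTheory.volume 0 x := by
      simp only [Matrix.sub_apply]
      exact iψψ.sub iηη
    have := intervalIntegral.integral_eq_sub_of_hasDerivAt hder hint
    rw [this, hT0]
    simp
  have hsplit : (∫ t in (0:ℝ)..x, ((φ l t)ᴴ * φ l t - (η l t)ᴴ * η l t) i j)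
      = (∫ t in (0:ℝ)..x, ((φ l t)ᴴ * φ l t) i j)
        - ∫ t in (0:ℝ)..x, ((η l t)ᴴ * η l t) i j := by
    simp only [Matrix.sub_apply]
    exact intervalIntegral.integral_sub iψψ iηη
  linear_combination hsplit - key
end
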